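/- Let X be a metric space, n ∈ ℕ, 0 < s₁ < ∞, 0 < c < 1 and x₀ ∈ X. Assume there is a sequence of radii r_m → ∞ such that dim_N(B(x₀,r_m),c,s) ≤ n for all 0 < s ≤ s₁ and all m = 1, 2, …. Then dim_N(X, c²/5, s) ≤ n for all 0 < s ≤ (1 + (2/3)c)s₁. -/
import Mathlib


open Metric Set

/-- The set `A` in a space with distance function `d` has Nagata dimension at most `n`
with constant `c` at scale `s` (written `dim_N(A,c,s) ≤ n` in the paper): there is a
cover `𝒰 = ⋃_{k=0}^n 𝒰 k` of `A` by subsets of `A`, each member having diameter at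
most `s`, such that each family `𝒰 k` is `c*s`-separated. -/
def dimNle {X : Type*} (d : X → X → ℝ) (A : Set X) (c s : ℝ) (n : ℕ) : Prop :=
  ∃ 𝒰 : Fin (n + 1) → Set (Set X),
    (∀ k, ∀ U ∈ 𝒰 k, U ⊆ A) ∧
    (∀ p ∈ A, ∃ k, ∃ U ∈ 𝒰 k, p ∈ U) ∧
    (∀ k, ∀ U ∈ 𝒰 k, ∀ a ∈ U, ∀ b ∈ U, d a b ≤ s) ∧
    (∀ k, ∀ U ∈ 𝒰 k, ∀ V ∈ 𝒰 k, U ≠ V → ∀ a ∈ U, ∀ b ∈ V, c * s ≤ d a b)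

/-- `dimAle d A C Rbar β` (written `dim_A(A,C,Rbar) ≤ β` in the paper): for all
`0 < r < R < Rbar` and every `x ∈ A`, the ball of radius `R` around `x` in `A` can be
covered by at most `C * (R/r)^β` balls of radius `r` with centers in `A`. -/
def dimAle {X : Type*} (d : X → X → ℝ) (A : Set X) (C Rbar β : ℝ) : Prop :=
  ∀ r R : ℝ, 0 < r → r < R → R < Rbar → ∀ x ∈ A,
    ∃ T : Finset X, ↑T ⊆ A ∧ (T.card : ℝ) ≤ C * (R / r) ^ β ∧
      ∀ z ∈ A, d z x < R → ∃ t ∈ T, d z t < r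

/-- `d` is a metric distance function on `Y`: symmetric, triangle inequality, and
vanishing exactly on the diagonal. -/
def IsMetricDist {Y : Type*} (d : Y → Y → ℝ) : Prop :=
  (∀ a b, d a b = d b a) ∧ (∀ a b c, d a c ≤ d a b + d b c) ∧ (∀ a b, d a b = 0 ↔ a = b)

/-- An `ε`-coupling between the pointed spaces `(A, dA, a₀)` and `(B, dB, b₀)`:
a pseudometric on the disjoint union extending `dA` and `dB`, with `d(a₀,b₀) ≤ ε`,
every point of `B_A(a₀,1/ε)` within distance `< ε` of a point of `B`, and every point
of `B_B(b₀,1/ε)` within distance `< ε` of a point of `A`. -/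
def IsCoupling {A B : Type*} (dA : A → A → ℝ) (dB : B → B → ℝ) (a₀ : A) (b₀ : B)
    (ε : ℝ) (d : A ⊕ B → A ⊕ B → ℝ) : Prop :=
  (∀ p q, d p q = d q p) ∧
  (∀ p, d p p = 0) ∧
  (∀ p q r, d p r ≤ d p q + d q r) ∧
  (∀ u v : A, d (Sum.inl u) (Sum.inl v) = dA u v) ∧
  (∀ u v : B, d (Sum.inr u) (Sum.inr v) = dB u v) ∧
  d (Sum.inl a₀) (Sum.inr b₀) ≤ ε ∧
  (∀ u : A, dA u a₀ < 1 / ε → ∃ v : B, d (Sum.inl u) (Sum.inr v) < ε) ∧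
  (∀ v : B, dB v b₀ < 1 / ε → ∃ u : A, d (Sum.inl u) (Sum.inr v) < ε)

/-- If there is a sequence of radii `r_m → ∞` with
`dim_N(B(x₀,r_m),c,s) ≤ n` for all `0 < s ≤ s₁`, then
`dim_N(X, c²/5, s) ≤ n` for all `0 < s ≤ (1 + (2/3)c)s₁`. -/
theorem nagata_exhaustion {X : Type*} [MetricSpace X] (n : ℕ) (s₁ c : ℝ)
    (hs₁ : 0 < s₁) (hc0 : 0 < c) (hc1 : c < 1) (x₀ : X) (r : ℕ → ℝ)
    (hr : Filter.Tendsto r Filter.atTop Filter.atTop)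
    (hdim : ∀ m : ℕ, ∀ s : ℝ, 0 < s → s ≤ s₁ →
      dimNle (fun a b : X => dist a b) (Metric.ball x₀ (r m)) c s n) :
    ∀ s : ℝ, 0 < s → s ≤ (1 + (2/3) * c) * s₁ →
      dimNle (fun a b : X => dist a b) (Set.univ : Set X) (c ^ 2 / 5) s n := by
  intro s hs hsle
  -- the working scale
  set s' : ℝ := min s s₁ with hs'def
  have hs'pos : 0 < s' := lt_min hs hs₁
  have hs'le : s' ≤ s₁ := min_le_right _ _
  have hs's : s' ≤ s := min_le_left _ _
  -- key arithmetic: c^2/5 * s ≤ c * s'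
  have harith : c ^ 2 / 5 * s ≤ c * s' := by
    rcases le_total s s₁ with h | h
    · have h1 : c ^ 2 / 5 ≤ c := by nlinarith
      rw [hs'def, inf_eq_left.2 h]
      exact mul_le_mul_of_nonneg_right h1 hs.le
    · have h2 : c ^ 2 / 5 * (1 + 2 / 3 * c) ≤ c := by nlinarith
      rw [hs'def, inf_eq_right.2 h]
      calc c ^ 2 / 5 * s ≤ c ^ 2 / 5 * ((1 + 2 / 3 * c) * s₁) :=
            mul_le_mul_of_nonneg_left hsle (by positivity)
        _ = c ^ 2 / 5 * (1 + 2 / 3 * c) * s₁ := by ring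
        _ ≤ c * s₁ := mul_le_mul_of_nonneg_right h2 hs₁.le
  -- covers of the balls at scale s'
  have hdim' := fun m => hdim m s' hs'pos hs'le
  choose 𝒱 hsub hcov hdiam hsep using hdim'
  -- selection of a set containing each point, for each m
  have hsel : ∀ (p : X) (m : ℕ), ∃ (k : Fin (n + 1)) (U : Set X),
      p ∈ Metric.ball x₀ (r m) → U ∈ 𝒱 m k ∧ p ∈ U := by
    intro p m
    by_cases h : p ∈ Metric.ball x₀ (r m)
    · obtain ⟨k, U, hU, hp⟩ := hcov m p h
      exact ⟨k, U, fun _ => ⟨hU, hp⟩⟩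
    · exact ⟨0, ∅, fun h' => absurd h' h⟩
  choose K Uf hKU using hsel
  -- ultrafilter extending atTop
  let φ : Ultrafilter ℕ := Ultrafilter.of Filter.atTop
  have hφ : (φ : Filter ℕ) ≤ Filter.atTop := Ultrafilter.of_le _
  have hball : ∀ p : X, ∀ᶠ m in (φ : Filter ℕ), p ∈ Metric.ball x₀ (r m) := by
    intro p
    have : ∀ᶠ m in Filter.atTop, dist p x₀ < r m := hr.eventually_gt_atTop _
    exact (this.filter_mono hφ).mono fun m hm => mem_ball.2 hm
  -- the limit color of each point
  have hkex : ∀ p : X, ∃ κ : Fin (n + 1), ∀ᶠ m in (φ : Filter ℕ), K p m = κ := by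
    intro p
    obtain ⟨κ, hκ⟩ := (φ.map (K p)).eq_pure_of_finite
    refine ⟨κ, ?_⟩
    have : {κ} ∈ φ.map (K p) := by rw [hκ]; exact rfl
    have : (K p) ⁻¹' {κ} ∈ φ := this
    filter_upwards [this] with m hm using hm
  choose k hk using hkex
  -- the limit sets
  set S : X → Set X := fun p => {q | k q = k p ∧ ∀ᶠ m in (φ : Filter ℕ), Uf q m = Uf p m}
    with hSdef
  have hself : ∀ p, p ∈ S p := fun p => ⟨rfl, Filter.Eventually.of_forall fun _ => rfl⟩
  refine ⟨fun κ => {A | ∃ p, k p = κ ∧ A = S p}, ?_, ?_, ?_, ?_⟩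
  · intro κ U _; exact subset_univ _
  · intro p _
    exact ⟨k p, S p, ⟨p, rfl, rfl⟩, hself p⟩
  · -- diameter
    rintro κ U ⟨p, hpκ, rfl⟩ a ha b hb
    have h1 : ∀ᶠ m in (φ : Filter ℕ), Uf a m = Uf b m := by
      filter_upwards [ha.2, hb.2] with m h h' using h.trans h'.symm
    obtain ⟨m, hab, hba2, hbb⟩ :=
      (h1.and ((hball a).and (hball b))).exists
    obtain ⟨hUa, haU⟩ := hKU a m hba2
    obtain ⟨_, hbU⟩ := hKU b m hbb
    have : dist a b ≤ s' := hdiam m (K a m) (Uf a m) hUa a haU b (hab ▸ hbU)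
    exact this.trans hs's
  · -- separation
    rintro κ U ⟨p, hpκ, rfl⟩ V ⟨q, hqκ, rfl⟩ hUV a ha b hb
    -- colors agree
    have hka : k a = κ := ha.1.trans hpκ
    have hkb : k b = κ := hb.1.trans hqκ
    -- if Uf a = Uf b eventually, then S p = S q
    have hnev : ¬ ∀ᶠ m in (φ : Filter ℕ), Uf a m = Uf b m := by
      intro hev
      apply hUV
      have hpq : ∀ᶠ m in (φ : Filter ℕ), Uf p m = Uf q m := by
        filter_upwards [ha.2, hb.2, hev] with m h1 h2 h3
        exact h1.symm.trans (h3.trans h2)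
      ext x
      constructor
      · rintro ⟨hx1, hx2⟩
        exact ⟨hx1.trans (hpκ.trans hqκ.symm), hx2.mp (hpq.mono fun m h h' => h'.trans h)⟩
      · rintro ⟨hx1, hx2⟩
        exact ⟨hx1.trans (hqκ.trans hpκ.symm), hx2.mp (hpq.mono fun m h h' => h'.trans h.symm)⟩
    have hne : ∀ᶠ m in (φ : Filter ℕ), Uf a m ≠ Uf b m :=
      Ultrafilter.eventually_not.2 hnev
    obtain ⟨m, hneq, hKa, hKb, hma, hmb⟩ :=
      (hne.and ((hk a).and ((hk b).and ((hball a).and (hball b))))).exists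
    obtain ⟨hUa, haU⟩ := hKU a m hma
    obtain ⟨hUb, hbU⟩ := hKU b m hmb
    rw [hKa, hka] at hUa
    rw [hKb, hkb] at hUb
    have := hsep m κ (Uf a m) hUa (Uf b m) hUb hneq a haU b hbU
    calc c ^ 2 / 5 * s ≤ c * s' := harith
    _ ≤ dist a b := this
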